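/- Suppose a nonnegative continuous function G : [0, t₀/2] → ℝ satisfies G(t) ≤ m₀F(t) + c where F(t) = ∫₀^t G(τ)² dτ, m₀, c > 0, and t₀ = 1/(cm₀). Then G(t) ≤ (M(t)+1)c with M(t) = 1/(1 − cm₀t); in particular G(t) ≤ 3c for t ∈ [0, t₀/2]. -/

import Mathlib

open Real MeasureTheory Set

theorem stmt_10 (m₀ c : ℝ) (hm : 0 < m₀) (hc : 0 < c)
    (G : ℝ → ℝ)
    (hcont : ContinuousOn G (Set.Icc 0 (1 / (c * m₀) / 2)))
    (hnonneg : ∀ t ∈ Set.Icc (0:ℝ) (1 / (c * m₀) / 2), 0 ≤ G t)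
    (hineq : ∀ t ∈ Set.Icc (0:ℝ) (1 / (c * m₀) / 2),
      G t ≤ m₀ * (∫ τ in (0:ℝ)..t, G τ ^ 2) + c) :
    ∀ t ∈ Set.Icc (0:ℝ) (1 / (c * m₀) / 2),
      G t ≤ (1 / (1 - c * m₀ * t) + 1) * c ∧ G t ≤ 3 * c := by
  set T : ℝ := 1 / (c * m₀) / 2 with hTdef
  have hT0 : (0:ℝ) ≤ T := by positivity
  -- extend G to all of ℝ
  set g : ℝ → ℝ := fun x => G (projIcc 0 T hT0 x) with hgdef
  have hgcont : Continuous g := by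
    apply hcont.comp_continuous (continuous_subtype_val.comp continuous_projIcc)
    exact fun x => (projIcc 0 T hT0 x).2
  have hgeq : ∀ x ∈ Icc (0:ℝ) T, g x = G x := by
    intro x hx
    simp [hgdef, projIcc_of_mem hT0 hx]
  have hgnonneg : ∀ x, 0 ≤ g x := fun x => hnonneg _ (projIcc 0 T hT0 x).2
  -- H
  set H : ℝ → ℝ := fun t => m₀ * (∫ τ in (0:ℝ)..t, g τ ^ 2) + c with hHdef
  have hg2 : Continuous fun τ => g τ ^ 2 := hgcont.pow 2
  have hH' : ∀ x, HasDerivAt H (m₀ * g x ^ 2) x := by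
    intro x
    exact ((hg2.integral_hasStrictDerivAt 0 x).hasDerivAt.const_mul m₀).add_const c
  have hHpos : ∀ x, 0 ≤ x → c ≤ H x := by
    intro x hx
    have h1 : 0 ≤ ∫ τ in (0:ℝ)..x, g τ ^ 2 :=
      intervalIntegral.integral_nonneg hx (fun τ _ => sq_nonneg _)
    have h2 : H x = m₀ * (∫ τ in (0:ℝ)..x, g τ ^ 2) + c := rfl
    nlinarith
  -- integral congruence on Icc 0 T
  have hintcong : ∀ x ∈ Icc (0:ℝ) T,
      (∫ τ in (0:ℝ)..x, G τ ^ 2) = ∫ τ in (0:ℝ)..x, g τ ^ 2 := by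
    intro x hx
    apply intervalIntegral.integral_congr
    intro τ hτ
    rw [uIcc_of_le hx.1] at hτ
    show G τ ^ 2 = g τ ^ 2
    rw [hgeq τ ⟨hτ.1, le_trans hτ.2 hx.2⟩]
  have hGH : ∀ x ∈ Icc (0:ℝ) T, G x ≤ H x := by
    intro x hx
    have := hineq x hx
    rw [hintcong x hx] at this
    exact this
  have hgH : ∀ x ∈ Icc (0:ℝ) T, g x ≤ H x := by
    intro x hx; rw [hgeq x hx]; exact hGH x hx
  -- ψ
  set ψ : ℝ → ℝ := fun t => 1 / c - m₀ * t - (H t)⁻¹ with hψdef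
  have hψ' : ∀ x, 0 < x → x < T →
      HasDerivAt ψ (-m₀ + m₀ * g x ^ 2 / (H x) ^ 2) x := by
    intro x hx0 hxT
    have hne : H x ≠ 0 := by
      have := hHpos x hx0.le; linarith
    have h1 : HasDerivAt (fun t => (H t)⁻¹) (-(m₀ * g x ^ 2) / (H x) ^ 2) x :=
      (hH' x).inv hne
    have h2 : HasDerivAt (fun t => 1 / c - m₀ * t) (-m₀) x := by
      simpa using ((hasDerivAt_id x).const_mul m₀).const_sub (1/c)
    have := h2.sub h1
    convert this using 1
    · rfl
    · rfl
    · rfl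
    · ring
  have hψanti : AntitoneOn ψ (Icc 0 T) := by
    apply antitoneOn_of_deriv_nonpos (convex_Icc 0 T)
    · apply ContinuousOn.sub
      · exact (continuous_const.sub (continuous_const.mul continuous_id)).continuousOn
      · apply ContinuousOn.inv₀
        · exact (Continuous.add (continuous_const.mul
            (intervalIntegral.continuous_primitive (fun a b => hg2.intervalIntegrable a b) 0))
            continuous_const).continuousOn
        · intro x hx
          have := hHpos x hx.1; intro h; rw [h] at this; linarith
    · intro x hx
      rw [interior_Icc] at hx
      exact ((hψ' x hx.1 hx.2).differentiableAt).differentiableWithinAt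
    · intro x hx
      rw [interior_Icc] at hx
      rw [(hψ' x hx.1 hx.2).deriv]
      have hHx : c ≤ H x := hHpos x hx.1.le
      have hgx : g x ≤ H x := hgH x ⟨hx.1.le, hx.2.le⟩
      have hg0 : 0 ≤ g x := hgnonneg x
      have hsq : g x ^ 2 ≤ H x ^ 2 := by nlinarith
      have hHx0 : 0 < H x := lt_of_lt_of_le hc hHx
      have hH2 : 0 < H x ^ 2 := by positivity
      have : m₀ * g x ^ 2 / H x ^ 2 ≤ m₀ := by
        rw [div_le_iff₀ hH2]
        nlinarith
      linarith
  have hψ0 : ψ 0 = 0 := by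
    simp [hψdef, hHdef]
  -- main bound
  intro t ht
  have hψt : ψ t ≤ 0 := by
    rw [← hψ0]
    exact hψanti (left_mem_Icc.mpr hT0) ht ht.1
  have hcm : 0 < c * m₀ := mul_pos hc hm
  have hmt : c * m₀ * t ≤ 1 / 2 := by
    have : c * m₀ * t ≤ c * m₀ * T := by
      apply mul_le_mul_of_nonneg_left ht.2 hcm.le
    calc c * m₀ * t ≤ c * m₀ * T := this
      _ = 1 / 2 := by rw [hTdef]; field_simp
  have hden : (1:ℝ)/2 ≤ 1 - c * m₀ * t := by linarith
  have hden' : (0:ℝ) < 1 - c * m₀ * t := by linarith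
  have h1 : m₀ * t ≤ 1/(2*c) := by
    rw [le_div_iff₀ (by positivity : (0:ℝ) < 2*c)]
    nlinarith
  have h2c : 1/c - 1/(2*c) = 1/(2*c) := by field_simp; ring
  have hinvpos : 0 < 1/c - m₀*t := by
    have : (0:ℝ) < 1/(2*c) := by positivity
    linarith
  have hHt0 : 0 < H t := lt_of_lt_of_le hc (hHpos t ht.1)
  have hψle : 1/c - m₀ * t ≤ (H t)⁻¹ := by
    have h : 1/c - m₀*t - (H t)⁻¹ ≤ 0 := hψt
    linarith
  have hHt : H t ≤ 1/(1/c - m₀*t) := by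
    rw [le_div_iff₀ hinvpos]
    nlinarith [mul_le_mul_of_nonneg_left hψle hHt0.le,
      mul_inv_cancel₀ (ne_of_gt hHt0)]
  have hMeq : 1/(1/c - m₀*t) = 1/(1 - c*m₀*t) * c := by
    rw [div_mul_eq_mul_div, div_eq_div_iff (ne_of_gt hinvpos) (ne_of_gt hden')]
    field_simp
  have hM : 1/(1 - c*m₀*t) ≤ 2 := by
    rw [div_le_iff₀ hden']; linarith
  have hGt : G t ≤ 1/(1 - c*m₀*t) * c := by
    rw [← hMeq]
    exact le_trans (hGH t ht) hHt
  constructor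
  · nlinarith
  · nlinarith
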